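/- Let w = (w_1, …, w_f) be a permutation lattice of order f. Then the word w̄ = (w̄_1, …, w̄_f) defined by w̄_i = #̂_{w^{(i−1)}}(w_i) + θ(w_i), where θ(k) = 1 if k > 0 and θ(k) = 0 if k < 0, is again a permutation lattice of order f. -/

import Mathlib

/-- `θ(k) = 1` if `k > 0` and `0` if `k < 0` (we also set it to `0` at `k = 0`,
a value never used since words have nonzero entries). -/
def theta (k : ℤ) : ℤ := if 0 < k then 1 else 0

/-- `hatCount w i k = #̂_{w^{(i)}}(k)`: the number of indices `1 ≤ j ≤ i` with `w j = k`
minus the number of indices `1 ≤ j ≤ i` with `w j = -k`.  A word of order `f` is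
represented by a function `w : ℕ → ℤ`, its entries being `w 1, …, w f` (1-based). -/
def hatCount (w : ℕ → ℤ) (i : ℕ) (k : ℤ) : ℤ :=
  (((Finset.Icc 1 i).filter fun j => w j = k).card : ℤ) -
    (((Finset.Icc 1 i).filter fun j => w j = -k).card : ℤ)

/-- `w : ℕ → ℤ` is a permutation lattice of order `f`: all entries `w 1, …, w f` are
nonzero, and for every prefix `w^{(i)}` (`1 ≤ i ≤ f`) the sequence
`k ↦ #̂_{w^{(i)}}(k)` (`k ≥ 1`) is weakly decreasing with nonnegative terms. -/
def IsPermLattice (f : ℕ) (w : ℕ → ℤ) : Prop :=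
  (∀ i, 1 ≤ i → i ≤ f → w i ≠ 0) ∧
  ∀ i, 1 ≤ i → i ≤ f → ∀ k : ℤ, 1 ≤ k →
    hatCount w i (k + 1) ≤ hatCount w i k ∧ 0 ≤ hatCount w i k

/-- The transpose word: `(w^t)_i = #̂_{w^{(i-1)}}(w_i) + θ(w_i)`. -/
def transposePL (w : ℕ → ℤ) : ℕ → ℤ := fun i => hatCount w (i - 1) (w i) + theta (w i)

namespace TransposeAux

lemma hatCount_zero (w : ℕ → ℤ) (k : ℤ) : hatCount w 0 k = 0 := by
  simp [hatCount]

lemma hatCount_neg (w : ℕ → ℤ) (i : ℕ) (k : ℤ) :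
    hatCount w i (-k) = -hatCount w i k := by
  simp only [hatCount, neg_neg]; ring

lemma hatCount_succ (w : ℕ → ℤ) (i : ℕ) (k : ℤ) :
    hatCount w (i+1) k = hatCount w i k
      + (if w (i+1) = k then 1 else 0) - (if w (i+1) = -k then 1 else 0) := by
  have h : Finset.Icc 1 (i+1) = insert (i+1) (Finset.Icc 1 i) :=
    (Finset.insert_Icc_right_eq_Icc_add_one (by omega)).symm
  have hni : ∀ p : ℕ → Prop, ∀ hp : DecidablePred p,
      (i+1) ∉ (Finset.Icc 1 i).filter p := by
    intro p hp hmem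
    have := (Finset.mem_filter.mp hmem).1
    simp at this
  unfold hatCount
  rw [h, Finset.filter_insert, Finset.filter_insert]
  split_ifs <;>
    (try rw [Finset.card_insert_of_notMem (hni _ _)]) <;>
    (try rw [Finset.card_insert_of_notMem (hni _ _)]) <;> push_cast <;> ring

lemma anti_of_step {g : ℤ → ℤ} (h : ∀ k : ℤ, 1 ≤ k → g (k+1) ≤ g k)
    (j : ℤ) (hj : 1 ≤ j) : ∀ k, j ≤ k → g k ≤ g j :=
  Int.le_induction (le_refl _) (fun n hn ih => le_trans (h n (le_trans hj hn)) ih)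

/-- If `#̂_{w^{(i)}}(k) ≥ 1` and the prefix counts are weakly decreasing, then `k ≤ i`. -/
lemma le_of_one_le_hatCount (w : ℕ → ℤ) (i : ℕ)
    (hmono : ∀ k : ℤ, 1 ≤ k → hatCount w i (k+1) ≤ hatCount w i k)
    (k : ℤ) (hk : 1 ≤ k) (hpos : 1 ≤ hatCount w i k) : k ≤ (i : ℤ) := by
  classical
  have hall : ∀ j : ℤ, 1 ≤ j → j ≤ k → 1 ≤ hatCount w i j := fun j hj hjk =>
    le_trans hpos (anti_of_step hmono j hj k hjk)
  have hex : ∀ j : ℤ, ∃ t : ℕ, (1 ≤ j ∧ j ≤ k) → (t ∈ Finset.Icc 1 i ∧ w t = j) := by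
    intro j
    by_cases hj : 1 ≤ j ∧ j ≤ k
    · have h1 := hall j hj.1 hj.2
      by_contra hcon
      push_neg at hcon
      have hempty : ((Finset.Icc 1 i).filter fun t => w t = j) = ∅ := by
        ext t
        simp only [Finset.mem_filter, Finset.notMem_empty, iff_false, not_and]
        intro ht hwt
        exact (hcon t).2 ht hwt
      unfold hatCount at h1
      rw [hempty] at h1
      simp only [Finset.card_empty, Nat.cast_zero, zero_sub] at h1
      have : (0:ℤ) ≤ (((Finset.Icc 1 i).filter fun t => w t = -j).card : ℤ) :=
        Int.natCast_nonneg _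
      omega
    · exact ⟨0, fun h => (hj h).elim⟩
  choose g hg using hex
  have hcard : (Finset.Icc (1:ℤ) k).card ≤ (Finset.Icc (1:ℕ) i).card := by
    apply Finset.card_le_card_of_injOn g
    · intro j hj
      rw [Finset.mem_coe, Finset.mem_Icc] at hj
      exact (hg j hj).1
    · intro j1 hj1 j2 hj2 heq
      rw [Finset.mem_coe, Finset.mem_Icc] at hj1 hj2
      have e1 := (hg j1 hj1).2
      have e2 := (hg j2 hj2).2
      rw [heq] at e1
      rw [e1] at e2
      exact e2
  rw [Nat.card_Icc, Int.card_Icc] at hcard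
  omega

lemma good (f : ℕ) (w : ℕ → ℤ) (hw : IsPermLattice f w) (i : ℕ) (hif : i ≤ f) :
    ∀ k : ℤ, 1 ≤ k → hatCount w i (k + 1) ≤ hatCount w i k ∧ 0 ≤ hatCount w i k := by
  rcases Nat.eq_zero_or_pos i with rfl | hi
  · intro k hk; simp [hatCount_zero]
  · exact hw.2 i hi hif

/-- Key invariant: `#̂_{w̄^{(i)}}(c)` equals the number of rows `k` with
`#̂_{w^{(i)}}(k) ≥ c`, i.e. the transposed partition. -/
lemma key (f : ℕ) (w : ℕ → ℤ) (hw : IsPermLattice f w) :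
    ∀ i, i ≤ f → ∀ c : ℤ, 1 ≤ c →
      hatCount (transposePL w) i c =
        (((Finset.Icc (1:ℤ) (i:ℤ)).filter fun k => c ≤ hatCount w i k).card : ℤ) := by
  intro i
  induction i with
  | zero =>
    intro _ c hc
    rw [hatCount_zero]
    have : Finset.Icc (1:ℤ) ((0:ℕ):ℤ) = ∅ := by
      apply Finset.Icc_eq_empty; norm_num
    rw [this]
    simp
  | succ i ih =>
    intro hif c hc
    have hif' : i ≤ f := Nat.le_of_succ_le hif
    have goodi := good f w hw i hif'
    have goodi1 := good f w hw (i+1) hif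
    have hmono_i : ∀ k : ℤ, 1 ≤ k → hatCount w i (k+1) ≤ hatCount w i k :=
      fun k hk => (goodi k hk).1
    have hmono_i1 : ∀ k : ℤ, 1 ≤ k → hatCount w (i+1) (k+1) ≤ hatCount w (i+1) k :=
      fun k hk => (goodi1 k hk).1
    have hne : w (i+1) ≠ 0 := hw.1 (i+1) (by omega) hif
    have hbar_succ : transposePL w (i+1) = hatCount w i (w (i+1)) + theta (w (i+1)) := by
      simp [transposePL]
    have ihc := ih hif' c hc
    -- the step formula for the transposed word
    have hLHS := hatCount_succ (transposePL w) i c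
    rcases lt_or_gt_of_ne hne with hneg | hpos
    · -- negative letter: w (i+1) = -k with k ≥ 1
      set k : ℤ := -(w (i+1)) with hkdef
      have hk1 : 1 ≤ k := by omega
      have hwk : w (i+1) = -k := by omega
      set c0 : ℤ := hatCount w i k with hc0def
      have hstep : ∀ k' : ℤ, 1 ≤ k' →
          hatCount w (i+1) k' = hatCount w i k' - (if k' = k then 1 else 0) := by
        intro k' hk'
        rw [hatCount_succ]
        have h1 : ¬ (w (i+1) = k') := by omega
        have h2 : (w (i+1) = -k') ↔ (k' = k) := by omega
        rw [if_neg h1]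
        by_cases h : k' = k
        · rw [if_pos (h2.mpr h), if_pos h]; ring
        · rw [if_neg (fun hh => h (h2.mp hh)), if_neg h]; ring
      have hlam1k : hatCount w (i+1) k = c0 - 1 := by
        rw [hstep k hk1, if_pos rfl]
      have hc01 : 1 ≤ c0 := by
        have := (goodi1 k hk1).2
        omega
      have hkle : k ≤ (i:ℤ) :=
        le_of_one_le_hatCount w i hmono_i k hk1 hc01
      have hbar : transposePL w (i+1) = -c0 := by
        rw [hbar_succ, hwk, hatCount_neg]
        unfold theta
        rw [if_neg (by omega)]
        omega
      -- LHS computation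
      rw [hLHS, hbar, ihc]
      rw [if_neg (show ¬ (-c0 = c) by omega)]
      -- RHS: compare the two filters
      have hcast : ((i:ℤ) + 1) = ((i+1 : ℕ) : ℤ) := by push_cast; ring
      set S := (Finset.Icc (1:ℤ) (i:ℤ)).filter (fun k' => c ≤ hatCount w i k') with hS
      set T := (Finset.Icc (1:ℤ) ((i+1:ℕ):ℤ)).filter
        (fun k' => c ≤ hatCount w (i+1) k') with hT
      have hrange : ∀ k' : ℤ, 1 ≤ k' → k' ≤ (i:ℤ)+1 → c ≤ hatCount w (i+1) k' →
          k' ≤ (i:ℤ) := by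
        intro k' h1 h2 h3
        by_contra hcon
        push_neg at hcon
        have hki : k' = (i:ℤ)+1 := by omega
        have : hatCount w i k' ≤ 0 := by
          by_contra hp
          push_neg at hp
          have := le_of_one_le_hatCount w i hmono_i k' h1 (by omega)
          omega
        have hkk : k' ≠ k := by omega
        have := hstep k' h1
        rw [if_neg hkk] at this
        omega
      by_cases hcc : c = c0
      · -- a column is removed: T = S.erase k
        have hkS : k ∈ S := by
          rw [hS, Finset.mem_filter, Finset.mem_Icc]
          exact ⟨⟨hk1, hkle⟩, by omega⟩
        have hTS : T = S.erase k := by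
          ext k'
          rw [hT, hS, Finset.mem_filter, Finset.mem_erase, Finset.mem_filter,
            Finset.mem_Icc, Finset.mem_Icc, ← hcast]
          constructor
          · rintro ⟨⟨h1, h2⟩, h3⟩
            have hkk : k' ≠ k := by
              intro hh
              rw [hh, hlam1k] at h3
              omega
            have := hstep k' h1
            rw [if_neg hkk] at this
            exact ⟨hkk, ⟨h1, hrange k' h1 h2 h3⟩, by omega⟩
          · rintro ⟨hkk, ⟨h1, h2⟩, h3⟩
            have := hstep k' h1
            rw [if_neg hkk] at this
            exact ⟨⟨h1, by omega⟩, by omega⟩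
        rw [hTS, Finset.card_erase_of_mem hkS, if_pos (by omega)]
        have hSpos : 1 ≤ S.card := Finset.card_pos.mpr ⟨k, hkS⟩
        omega
      · -- nothing changes: T = S
        have hTS : T = S := by
          ext k'
          rw [hT, hS, Finset.mem_filter, Finset.mem_filter,
            Finset.mem_Icc, Finset.mem_Icc, ← hcast]
          constructor
          · rintro ⟨⟨h1, h2⟩, h3⟩
            refine ⟨⟨h1, hrange k' h1 h2 h3⟩, ?_⟩
            have := hstep k' h1
            by_cases hkk : k' = k
            · rw [if_pos hkk] at this
              rw [hkk] at h3 ⊢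
              omega
            · rw [if_neg hkk] at this; omega
          · rintro ⟨⟨h1, h2⟩, h3⟩
            refine ⟨⟨h1, by omega⟩, ?_⟩
            have := hstep k' h1
            by_cases hkk : k' = k
            · rw [if_pos hkk] at this
              rw [hkk] at h3 ⊢
              omega
            · rw [if_neg hkk] at this; omega
        rw [hTS, if_neg (by omega)]
        omega
    · -- positive letter: w (i+1) = k with k ≥ 1
      set k : ℤ := w (i+1) with hkdef
      have hk1 : 1 ≤ k := by omega
      set c0 : ℤ := hatCount w i k + 1 with hc0def
      have hstep : ∀ k' : ℤ, 1 ≤ k' →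
          hatCount w (i+1) k' = hatCount w i k' + (if k' = k then 1 else 0) := by
        intro k' hk'
        rw [hatCount_succ]
        have h2 : ¬ (w (i+1) = -k') := by omega
        have h1 : (w (i+1) = k') ↔ (k' = k) := by omega
        rw [if_neg h2]
        by_cases h : k' = k
        · rw [if_pos (h1.mpr h), if_pos h]; ring
        · rw [if_neg (fun hh => h (h1.mp hh)), if_neg h]; ring
      have hlam1k : hatCount w (i+1) k = c0 := by
        rw [hstep k hk1, if_pos rfl]
      have hc01 : 1 ≤ c0 := by
        have := (goodi k hk1).2
        omega
      have hkle : k ≤ (i:ℤ) + 1 := by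
        have := le_of_one_le_hatCount w (i+1) hmono_i1 k hk1 (by omega)
        push_cast at this
        omega
      have hbar : transposePL w (i+1) = c0 := by
        rw [hbar_succ]
        unfold theta
        rw [if_pos (show (0:ℤ) < k by omega)]
      -- LHS computation
      rw [hLHS, hbar, ihc]
      rw [if_neg (show ¬ (c0 = -c) by omega)]
      -- RHS: compare the two filters
      have hcast : ((i:ℤ) + 1) = ((i+1 : ℕ) : ℤ) := by push_cast; ring
      set S := (Finset.Icc (1:ℤ) (i:ℤ)).filter (fun k' => c ≤ hatCount w i k') with hS
      set T := (Finset.Icc (1:ℤ) ((i+1:ℕ):ℤ)).filter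
        (fun k' => c ≤ hatCount w (i+1) k') with hT
      have hrange : ∀ k' : ℤ, 1 ≤ k' → c ≤ hatCount w i k' → k' ≤ (i:ℤ) := by
        intro k' h1 h3
        exact le_of_one_le_hatCount w i hmono_i k' h1 (by omega)
      by_cases hcc : c = c0
      · -- a column is added: T = insert k S
        have hknS : k ∉ S := by
          rw [hS, Finset.mem_filter]
          rintro ⟨-, h⟩
          omega
        have hTS : T = insert k S := by
          ext k'
          rw [hT, hS, Finset.mem_insert, Finset.mem_filter, Finset.mem_filter,
            Finset.mem_Icc, Finset.mem_Icc, ← hcast]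
          constructor
          · rintro ⟨⟨h1, h2⟩, h3⟩
            by_cases hkk : k' = k
            · exact Or.inl hkk
            · have := hstep k' h1
              rw [if_neg hkk] at this
              exact Or.inr ⟨⟨h1, hrange k' h1 (by omega)⟩, by omega⟩
          · rintro (hkk | ⟨⟨h1, h2⟩, h3⟩)
            · rw [hkk]
              exact ⟨⟨hk1, hkle⟩, by omega⟩
            · have := hstep k' h1
              refine ⟨⟨h1, by omega⟩, ?_⟩
              by_cases hkk : k' = k
              · rw [if_pos hkk] at this; omega
              · rw [if_neg hkk] at this; omega
        rw [hTS, Finset.card_insert_of_notMem hknS, if_pos (by omega)]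
        push_cast
        ring
      · -- nothing changes: T = S
        have hTS : T = S := by
          ext k'
          rw [hT, hS, Finset.mem_filter, Finset.mem_filter,
            Finset.mem_Icc, Finset.mem_Icc, ← hcast]
          constructor
          · rintro ⟨⟨h1, h2⟩, h3⟩
            have := hstep k' h1
            by_cases hkk : k' = k
            · rw [if_pos hkk] at this
              have h3' : c ≤ hatCount w i k' := by
                rw [hkk] at this h3 ⊢
                omega
              exact ⟨⟨h1, hrange k' h1 h3'⟩, h3'⟩
            · rw [if_neg hkk] at this
              exact ⟨⟨h1, hrange k' h1 (by omega)⟩, by omega⟩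
          · rintro ⟨⟨h1, h2⟩, h3⟩
            have := hstep k' h1
            refine ⟨⟨h1, by omega⟩, ?_⟩
            by_cases hkk : k' = k
            · rw [if_pos hkk] at this; omega
            · rw [if_neg hkk] at this; omega
        rw [hTS, if_neg (by omega)]
        omega

end TransposeAux

open TransposeAux

/-- If `w` is a permutation lattice of order `f`, then its transpose
`w^t` is again a permutation lattice of order `f`. -/
theorem transpose_isPermLattice (f : ℕ) (w : ℕ → ℤ) (hw : IsPermLattice f w) :
    IsPermLattice f (transposePL w) := by
  constructor
  · -- all entries of the transpose are nonzero
    intro i h1 h2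
    obtain ⟨i', rfl⟩ : ∃ i', i = i' + 1 := ⟨i - 1, by omega⟩
    have hne : w (i'+1) ≠ 0 := hw.1 (i'+1) (by omega) h2
    have goodi := good f w hw i' (by omega)
    have goodi1 := good f w hw (i'+1) h2
    have hbar_succ : transposePL w (i'+1) = hatCount w i' (w (i'+1)) + theta (w (i'+1)) := by
      simp [transposePL]
    rcases lt_or_gt_of_ne hne with hneg | hpos
    · set k : ℤ := -(w (i'+1)) with hkdef
      have hk1 : 1 ≤ k := by omega
      have hwk : w (i'+1) = -k := by omega
      have hlam1k : hatCount w (i'+1) k = hatCount w i' k - 1 := by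
        rw [hatCount_succ]
        rw [if_neg (show ¬ (w (i'+1) = k) by omega), if_pos (show w (i'+1) = -k by omega)]
        ring
      have hc01 : 1 ≤ hatCount w i' k := by
        have := (goodi1 k hk1).2
        omega
      rw [hbar_succ, hwk, hatCount_neg]
      unfold theta
      rw [if_neg (by omega)]
      omega
    · have hc0 : 0 ≤ hatCount w i' (w (i'+1)) := (goodi (w (i'+1)) (by omega)).2
      rw [hbar_succ]
      unfold theta
      rw [if_pos hpos]
      omega
  · -- the lattice condition for the transpose
    intro i h1 h2 c hc
    rw [key f w hw i h2 c hc, key f w hw i h2 (c+1) (by omega)]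
    constructor
    · have hsub : (Finset.Icc (1:ℤ) (i:ℤ)).filter (fun k => c + 1 ≤ hatCount w i k) ⊆
          (Finset.Icc (1:ℤ) (i:ℤ)).filter (fun k => c ≤ hatCount w i k) := by
        intro x hx
        rw [Finset.mem_filter] at hx ⊢
        exact ⟨hx.1, by omega⟩
      exact_mod_cast Finset.card_le_card hsub
    · exact Int.natCast_nonneg _
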